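/- arXiv:0910.5037 — 2 statements merged into one kernel-verified Lean document; each statement's English description precedes it below -/
import Mathlib

section
/- Let P be a real 2n×2n matrix in the symplectic group Sp(2n, ℝ), i.e. Pᵀ J P = J where J = [[0, Iₙ], [−Iₙ, 0]] is the standard symplectic matrix, and suppose all complex eigenvalues of P are equal to 1 (equivalently, (P − I)^{2n} = 0). Then there exists a real 2n×2n matrix X such that Xᵀ J + J X = 0 (X lies in the symplectic Lie algebra sp(2n, ℝ)), X is nilpotent (all eigenvalues of X are 0), and exp(X) = P, where exp denotes the matrix exponential. In particular, every unipotent symplectic matrix lies in the image of the exponential map of the symplectic Lie algebra. -/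
open Matrix

open Polynomial
open scoped Nat

namespace UnipSymp

variable {m : Type*} [Fintype m] [DecidableEq m]

lemma commute_aeval {A : Type*} [Ring A] [Algebra ℝ A] {a b : A}
    (h : Commute a b) (p : Polynomial ℝ) : Commute (aeval a p) b := by
  induction p using Polynomial.induction_on' with
  | add f g hf hg => rw [map_add]; exact hf.add_left hg
  | monomial i c =>
      rw [Polynomial.aeval_monomial]
      exact (Algebra.commute_algebraMap_left c b).mul_left (h.pow_left i)

lemma commute_aeval₂ {A : Type*} [Ring A] [Algebra ℝ A] {a b : A}
    (h : Commute a b) (p q : Polynomial ℝ) : Commute (aeval a p) (aeval b q) :=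
  commute_aeval ((commute_aeval h.symm q).symm) p

lemma exp_eq_sum {A : Matrix m m ℝ} {d : ℕ} (h : A ^ d = 0) :
    NormedSpace.exp A = ∑ j ∈ Finset.range d, (j !⁻¹ : ℝ) • A ^ j := by
  rw [NormedSpace.exp_eq_tsum ℝ]
  exact tsum_eq_sum fun j hj =>
    by rw [pow_eq_zero_of_le (Nat.le_of_not_lt fun h' => hj (Finset.mem_range.mpr h')) h,
      smul_zero]

/-- `a` is divisible by `N^j` inside the commutative algebra `ℝ[N]`. -/
def Dv (N : Matrix m m ℝ) (j : ℕ) (a : Matrix m m ℝ) : Prop :=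
  ∃ r : Polynomial ℝ, a = N ^ j * aeval N r

lemma Dv.zero (N : Matrix m m ℝ) (j : ℕ) : Dv N j 0 := ⟨0, by simp⟩

lemma Dv.add {N a b : Matrix m m ℝ} {j : ℕ} (ha : Dv N j a) (hb : Dv N j b) :
    Dv N j (a + b) := by
  obtain ⟨ra, rfl⟩ := ha; obtain ⟨rb, rfl⟩ := hb
  exact ⟨ra + rb, by rw [map_add, mul_add]⟩

lemma Dv.neg {N a : Matrix m m ℝ} {j : ℕ} (ha : Dv N j a) : Dv N j (-a) := by
  obtain ⟨ra, rfl⟩ := ha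
  exact ⟨-ra, by rw [map_neg, mul_neg]⟩

lemma Dv.sub {N a b : Matrix m m ℝ} {j : ℕ} (ha : Dv N j a) (hb : Dv N j b) :
    Dv N j (a - b) := by
  rw [sub_eq_add_neg]; exact ha.add hb.neg

lemma Dv.smul {N a : Matrix m m ℝ} {j : ℕ} (t : ℝ) (ha : Dv N j a) : Dv N j (t • a) := by
  obtain ⟨ra, rfl⟩ := ha
  refine ⟨C t * ra, ?_⟩
  rw [_root_.map_mul, aeval_C, ← Algebra.smul_def, mul_smul_comm]

lemma Dv.mul {N a b : Matrix m m ℝ} {i j : ℕ} (ha : Dv N i a) (hb : Dv N j b) :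
    Dv N (i + j) (a * b) := by
  obtain ⟨ra, rfl⟩ := ha; obtain ⟨rb, rfl⟩ := hb
  refine ⟨ra * rb, ?_⟩
  have hc : aeval N ra * N ^ j = N ^ j * aeval N ra :=
    ((commute_aeval (Commute.refl N) ra).pow_right j).eq
  rw [_root_.map_mul, pow_add]
  calc N ^ i * aeval N ra * (N ^ j * aeval N rb)
      = N ^ i * (aeval N ra * N ^ j) * aeval N rb := by noncomm_ring
    _ = N ^ i * (N ^ j * aeval N ra) * aeval N rb := by rw [hc]
    _ = N ^ i * N ^ j * (aeval N ra * aeval N rb) := by noncomm_ring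

lemma Dv.mono {N a : Matrix m m ℝ} {i j : ℕ} (hij : i ≤ j) (ha : Dv N j a) : Dv N i a := by
  obtain ⟨ra, rfl⟩ := ha
  refine ⟨X ^ (j - i) * ra, ?_⟩
  rw [_root_.map_mul, aeval_X_pow, ← mul_assoc, ← pow_add, Nat.add_sub_cancel' hij]

lemma Dv.pow {N a : Matrix m m ℝ} {i : ℕ} (ha : Dv N i a) (k : ℕ) : Dv N (i * k) (a ^ k) := by
  obtain ⟨ra, rfl⟩ := ha
  refine ⟨ra ^ k, ?_⟩
  rw [((commute_aeval (Commute.refl N) ra).pow_right i).symm.mul_pow, ← pow_mul, map_pow]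

lemma Dv.sum {N : Matrix m m ℝ} {j : ℕ} {s : Finset ℕ} {f : ℕ → Matrix m m ℝ}
    (h : ∀ x ∈ s, Dv N j (f x)) : Dv N j (∑ x ∈ s, f x) :=
  Finset.sum_induction f (Dv N j) (fun _ _ ha hb => ha.add hb) (Dv.zero N j) h

lemma dv_self (N : Matrix m m ℝ) : Dv N 1 N := ⟨1, by simp⟩

lemma main_ind (N : Matrix m m ℝ) (d : ℕ) (hN : N ^ d = 0) (k : ℕ) :
    ∃ p : Polynomial ℝ, p.coeff 0 = 0 ∧
      Dv N (k + 1) (NormedSpace.exp (aeval N p) - 1 - N) := by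
  induction k with
  | zero =>
      refine ⟨0, by simp, -1, ?_⟩
      rw [map_zero, NormedSpace.exp_zero]
      simp
  | succ k ih =>
      obtain ⟨p, hp0, q, hq⟩ := ih
      set c : Matrix m m ℝ := N ^ (k + 1) * aeval N q with hc
      have hexp : NormedSpace.exp (aeval N p) = 1 + N + c := by
        have : NormedSpace.exp (aeval N p) - 1 - N = c := hq
        rw [← this]; abel
      set qc : Polynomial ℝ := X ^ (k + 1) * q with hqc
      have hcq : c = aeval N qc := by rw [hqc, _root_.map_mul, aeval_X_pow]
      have hDc : Dv N (k + 1) c := ⟨q, rfl⟩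
      -- nilpotency of -c
      have hcd : (-c) ^ (d + 2) = 0 := by
        have h1 : c ^ d = 0 := by
          obtain ⟨r, hr⟩ := hDc.pow d
          rw [hr, pow_eq_zero_of_le (Nat.le_mul_of_pos_left d k.succ_pos) hN, zero_mul]
        rw [neg_pow, pow_eq_zero_of_le (by omega : d ≤ d + 2) h1, mul_zero]
      -- expand exp(-c)
      set e : Matrix m m ℝ :=
        ∑ j ∈ Finset.range d, ((j + 1 + 1)!⁻¹ : ℝ) • (-c) ^ (j + 1 + 1) with he
      have hexpc : NormedSpace.exp (-c) = e + -c + 1 := by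
        rw [exp_eq_sum hcd, Finset.sum_range_succ', Finset.sum_range_succ']
        simp only [pow_one, pow_zero, Nat.factorial_one, Nat.factorial_zero, Nat.cast_one,
          inv_one, one_smul, ← he]
        norm_num
      have hDe : Dv N (k + 2) e := by
        refine Dv.sum fun j _ => Dv.smul _ ?_
        refine Dv.mono ?_ (hDc.neg.pow (j + 1 + 1))
        calc k + 2 ≤ (k + 1) * 2 := by omega
          _ ≤ (k + 1) * (j + 1 + 1) := Nat.mul_le_mul_left _ (by omega)
      refine ⟨p - qc, ?_, ?_⟩
      · rw [coeff_sub, hp0, hqc, mul_comm, coeff_mul_X_pow']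
        simp
      · have hXp' : aeval N (p - qc) = aeval N p + -c := by
          rw [map_sub, hcq, sub_eq_add_neg]
        have hcomm : Commute (aeval N p) (-c) := by
          rw [hcq]; exact (commute_aeval₂ (Commute.refl N) p qc).neg_right
        rw [hXp', Matrix.exp_add_of_commute _ _ hcomm, hexp, hexpc]
        have hID : (1 + N + c) * (e + -c + 1) - 1 - N
            = e + N * e + c * e - N * c - c * c := by noncomm_ring
        rw [hID]
        have h1 : Dv N (k + 2) (N * e) :=
          Dv.mono (by omega) ((dv_self N).mul hDe)
        have h2 : Dv N (k + 2) (c * e) := Dv.mono (by omega) (hDc.mul hDe)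
        have h3 : Dv N (k + 2) (N * c) := Dv.mono (by omega) ((dv_self N).mul hDc)
        have h4 : Dv N (k + 2) (c * c) := Dv.mono (by omega) (hDc.mul hDc)
        exact (((hDe.add h1).add h2).sub h3).sub h4

lemma exists_log (N : Matrix m m ℝ) (d : ℕ) (hN : N ^ d = 0) :
    ∃ p : Polynomial ℝ, p.coeff 0 = 0 ∧ NormedSpace.exp (aeval N p) = 1 + N := by
  obtain ⟨p, hp0, r, hr⟩ := main_ind N d hN d
  refine ⟨p, hp0, ?_⟩
  rw [pow_succ, hN, zero_mul, zero_mul] at hr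
  have h2 : NormedSpace.exp (aeval N p) - (1 + N) = 0 := by rw [sub_add_eq_sub_sub]; exact hr
  exact sub_eq_zero.mp h2


lemma aeval_nilpotent {N : Matrix m m ℝ} {d : ℕ} (hN : N ^ d = 0) {p : Polynomial ℝ}
    (hp0 : p.coeff 0 = 0) : (aeval N p) ^ d = 0 := by
  have hp : aeval N p = N * aeval N p.divX := by
    conv_lhs => rw [← Polynomial.X_mul_divX_add p, hp0, map_zero, add_zero, _root_.map_mul,
      aeval_X]
  rw [hp, ((commute_aeval (Commute.refl N) p.divX).symm).mul_pow, hN, zero_mul]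

lemma exp_inj {A B : Matrix m m ℝ} (h : Commute A B) {dA dB : ℕ}
    (hA : A ^ dA = 0) (hB : B ^ dB = 0)
    (hexp : NormedSpace.exp A = NormedSpace.exp B) : A = B := by
  obtain ⟨k, hk⟩ := Commute.isNilpotent_sub h ⟨dA, hA⟩ ⟨dB, hB⟩
  set C := A - B with hC
  have h1 : NormedSpace.exp C = 1 := by
    rw [hC, sub_eq_add_neg, Matrix.exp_add_of_commute _ _ h.neg_right, hexp,
      ← Matrix.exp_add_of_commute _ _ (Commute.refl B).neg_right, add_neg_cancel,
      NormedSpace.exp_zero]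
  suffices hC0 : C = 0 by rw [hC] at hC0; exact sub_eq_zero.mp hC0
  rcases k with _ | k
  · have : (1 : Matrix m m ℝ) = 0 := by simpa using hk
    calc C = C * 1 := (mul_one C).symm
      _ = 0 := by rw [this, mul_zero]
  · -- peel the sum
    have hsum : (1 : Matrix m m ℝ)
        = C * (C * (∑ j ∈ Finset.range k, ((j + 1 + 1)!⁻¹ : ℝ) • C ^ j) + 1) + 1 := by
      calc (1 : Matrix m m ℝ) = NormedSpace.exp C := h1.symm
        _ = ∑ j ∈ Finset.range (k + 1 + 1), (j !⁻¹ : ℝ) • C ^ j :=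
            exp_eq_sum (pow_eq_zero_of_le (by omega) hk)
        _ = (∑ j ∈ Finset.range k, ((j + 1 + 1)!⁻¹ : ℝ) • C ^ (j + 1 + 1)
              + ((0 + 1)!⁻¹ : ℝ) • C ^ (0 + 1)) + (0!⁻¹ : ℝ) • C ^ 0 := by
            rw [Finset.sum_range_succ', Finset.sum_range_succ']
        _ = C * (C * (∑ j ∈ Finset.range k, ((j + 1 + 1)!⁻¹ : ℝ) • C ^ j) + 1) + 1 := by
            have hterm : ∀ j : ℕ, C * (C * (((j + 1 + 1)!⁻¹ : ℝ) • C ^ j))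
                = ((j + 1 + 1)!⁻¹ : ℝ) • C ^ (j + 1 + 1) := fun j => by
              rw [mul_smul_comm, mul_smul_comm, ← pow_succ', ← pow_succ']
            rw [mul_add, mul_one, Finset.mul_sum, Finset.mul_sum]
            simp only [hterm]
            norm_num
    set v : Matrix m m ℝ := ∑ j ∈ Finset.range k, ((j + 1 + 1)!⁻¹ : ℝ) • C ^ j with hv
    have hCv : Commute C v := by
      rw [hv]
      exact Commute.sum_right _ _ _ fun j _ => ((Commute.refl C).pow_right j).smul_right _
    have hbase : C * -(C * v) = C := by
      have h2 : (0 : Matrix m m ℝ) = C * (C * v) + C := by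
        have h3 := hsum
        nth_rewrite 1 [← zero_add (1 : Matrix m m ℝ)] at h3
        have h4 := add_right_cancel h3
        rw [mul_add, mul_one] at h4
        exact h4
      have h5 : C * (C * v) = -C := eq_neg_of_add_eq_zero_left h2.symm
      rw [mul_neg, h5, neg_neg]
    have hkey : ∀ t : ℕ, C = C * (-(C * v)) ^ t := by
      intro t
      induction t with
      | zero => rw [pow_zero, mul_one]
      | succ t iht =>
          rw [pow_succ', ← mul_assoc, hbase]
          exact iht
    have hCvk : (C * v) ^ (k + 1) = 0 := by
      rw [hCv.mul_pow, hk, zero_mul]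
    rw [hkey (k + 1), neg_pow, hCvk, mul_zero, mul_zero]


lemma conj_pow {A U V : Matrix m m ℝ} (hUV : U * V = 1) (hVU : V * U = 1) (k : ℕ) :
    (U * A * V) ^ k = U * A ^ k * V := by
  induction k with
  | zero => rw [pow_zero, pow_zero, mul_one, hUV]
  | succ k ih =>
      rw [pow_succ, pow_succ, ih]
      calc U * A ^ k * V * (U * A * V) = U * A ^ k * (V * U) * A * V := by noncomm_ring
        _ = U * A ^ k * 1 * A * V := by rw [hVU]
        _ = U * (A ^ k * A) * V := by noncomm_ring

lemma aeval_transpose (N : Matrix m m ℝ) (p : Polynomial ℝ) :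
    (aeval N p)ᵀ = aeval Nᵀ p := by
  rw [Polynomial.aeval_eq_sum_range (x := N), Polynomial.aeval_eq_sum_range (x := Nᵀ),
    Matrix.transpose_sum]
  exact Finset.sum_congr rfl fun i _ => by rw [Matrix.transpose_smul, Matrix.transpose_pow]

lemma aeval_conj {U V : Matrix m m ℝ} (hUV : U * V = 1) (hVU : V * U = 1)
    (N : Matrix m m ℝ) (p : Polynomial ℝ) :
    U * aeval N p * V = aeval (U * N * V) p := by
  rw [Polynomial.aeval_eq_sum_range (x := N), Polynomial.aeval_eq_sum_range (x := U * N * V),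
    Finset.mul_sum, Finset.sum_mul]
  exact Finset.sum_congr rfl fun i _ => by
    rw [mul_smul_comm, smul_mul_assoc, conj_pow hUV hVU]

end UnipSymp


open UnipSymp

/-- Every unipotent symplectic matrix `P` (all eigenvalues equal to `1`, i.e.
`(P - I)^(2n) = 0`, and `Pᵀ J P = J` with `J = [[0, Iₙ], [-Iₙ, 0]]`) is the exponential
of a nilpotent Hamiltonian matrix `X` (i.e. `Xᵀ J + J X = 0` and all eigenvalues of `X`
are zero, i.e. `X^(2n) = 0`). -/
theorem unipotent_symplectic_mem_image_exp
    (n : ℕ) (P : Matrix (Fin n ⊕ Fin n) (Fin n ⊕ Fin n) ℝ)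
    (hP : Pᵀ * (fromBlocks 0 1 (-1) 0) * P = fromBlocks 0 1 (-1) 0)
    (hunip : (P - 1) ^ (2 * n) = 0) :
    ∃ X : Matrix (Fin n ⊕ Fin n) (Fin n ⊕ Fin n) ℝ,
      Xᵀ * (fromBlocks 0 1 (-1) 0) + (fromBlocks 0 1 (-1) 0) * X = 0 ∧
      X ^ (2 * n) = 0 ∧
      NormedSpace.exp X = P := by
  classical
  set J : Matrix (Fin n ⊕ Fin n) (Fin n ⊕ Fin n) ℝ := fromBlocks 0 1 (-1) 0 with hJ
  set N : Matrix (Fin n ⊕ Fin n) (Fin n ⊕ Fin n) ℝ := P - 1 with hNdef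
  have hPN : (1 : Matrix (Fin n ⊕ Fin n) (Fin n ⊕ Fin n) ℝ) + N = P := by
    rw [hNdef]; abel
  obtain ⟨p, hp0, hexp⟩ := exists_log N (2 * n) hunip
  set X : Matrix (Fin n ⊕ Fin n) (Fin n ⊕ Fin n) ℝ := aeval N p with hXdef
  have hexpX : NormedSpace.exp X = P := by rw [hXdef, hexp, hPN]
  have hXnil : X ^ (2 * n) = 0 := aeval_nilpotent hunip hp0
  -- basic facts about J
  have hJJ : J * J = -1 := by
    rw [hJ, Matrix.fromBlocks_multiply]
    simp [← Matrix.fromBlocks_one, Matrix.fromBlocks_neg]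
  have hJneg : J * (-J) = 1 := by rw [mul_neg, hJJ, neg_neg]
  have hnegJ : (-J) * J = 1 := by rw [neg_mul, hJJ, neg_neg]
  have hJinv : J⁻¹ = -J := Matrix.inv_eq_right_inv hJneg
  have hJunit : IsUnit J := ⟨⟨J, -J, hJneg, hnegJ⟩, rfl⟩
  -- P is invertible
  have hPunit : IsUnit P := hexpX ▸ Matrix.isUnit_exp X
  have hPdet : IsUnit P.det := (Matrix.isUnit_iff_isUnit_det P).mp hPunit
  have hPPinv : P * P⁻¹ = 1 := Matrix.mul_nonsing_inv P hPdet
  have hPinvP : P⁻¹ * P = 1 := Matrix.nonsing_inv_mul P hPdet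
  -- transpose identity
  have hPt : Pᵀ = J * P⁻¹ * (-J) := by
    have h1 : Pᵀ * J = J * P⁻¹ := by
      calc Pᵀ * J = Pᵀ * J * (P * P⁻¹) := by rw [hPPinv, mul_one]
        _ = (Pᵀ * J * P) * P⁻¹ := by rw [mul_assoc, mul_assoc, mul_assoc]
        _ = J * P⁻¹ := by rw [hP]
    calc Pᵀ = Pᵀ * (J * (-J)) := by rw [hJneg, mul_one]
      _ = (Pᵀ * J) * (-J) := by rw [mul_assoc]
      _ = J * P⁻¹ * (-J) := by rw [h1]
  set B : Matrix (Fin n ⊕ Fin n) (Fin n ⊕ Fin n) ℝ := J * (-X) * (-J) with hBdef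
  have hBexp : NormedSpace.exp B = Pᵀ := by
    have h2 := Matrix.exp_conj J (-X) hJunit
    rw [hJinv] at h2
    rw [hBdef, h2, Matrix.exp_neg, hexpX, ← hPt]
  have hXtexp : NormedSpace.exp Xᵀ = Pᵀ := by
    rw [Matrix.exp_transpose, hexpX]
  -- nilpotency
  have hXtnil : (Xᵀ) ^ (2 * n) = 0 := by
    rw [← Matrix.transpose_pow, hXnil, Matrix.transpose_zero]
  have hBnil : B ^ (2 * n) = 0 := by
    rw [hBdef, conj_pow hJneg hnegJ, neg_pow, hXnil, mul_zero, mul_zero, zero_mul]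
  -- commutation
  have key1 : ∀ A C : Matrix (Fin n ⊕ Fin n) (Fin n ⊕ Fin n) ℝ, A * C = 1 →
      (J * A * (-J)) * (J * C * (-J)) = 1 := by
    intro A C hAC
    have h3 : (J * A * (-J)) * (J * C * (-J)) = J * (A * ((-J) * J) * C) * (-J) := by
      noncomm_ring
    rw [h3, hnegJ, mul_one, hAC, mul_one, hJneg]
  have hNM : Commute Nᵀ (J * N * (-J)) := by
    have hNt : Nᵀ = J * P⁻¹ * (-J) - 1 := by
      rw [hNdef, Matrix.transpose_sub, Matrix.transpose_one, hPt]
    have hM : J * N * (-J) = J * P * (-J) - 1 := by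
      rw [hNdef, mul_sub, sub_mul, mul_one, hJneg]
    rw [hNt, hM]
    have hc : Commute (J * P⁻¹ * (-J)) (J * P * (-J)) := by
      unfold Commute SemiconjBy
      rw [key1 _ _ hPinvP, key1 _ _ hPPinv]
    exact (hc.sub_right (Commute.one_right _)).sub_left (Commute.one_left _)
  have hcomm : Commute Xᵀ B := by
    have hXt : Xᵀ = aeval Nᵀ p := by rw [hXdef, aeval_transpose]
    have hBeq : B = -(aeval (J * N * (-J)) p) := by
      rw [hBdef, hXdef, ← aeval_conj hJneg hnegJ N p]
      noncomm_ring
    rw [hXt, hBeq]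
    exact (commute_aeval₂ hNM p p).neg_right
  have hXtB : Xᵀ = B := exp_inj hcomm hXtnil hBnil (hXtexp.trans hBexp.symm)
  refine ⟨X, ?_, hXnil, hexpX⟩
  rw [hXtB, hBdef, mul_assoc (J * -X), hnegJ, mul_one, mul_neg, neg_add_cancel]
end

section
/- Let V be a finite-dimensional real vector space, let ω be a nondegenerate alternating bilinear form on V, and let P : V → V be a linear map satisfying ω(Pu, Pv) = ω(u, v) for all u, v ∈ V (a linear symplectomorphism; in particular P is bijective). Let E₀ = ker((P − id)^{dim V}) be the generalized eigenspace of P for the eigenvalue 1, and let E₁ = {v ∈ V : ω(v, e) = 0 for all e ∈ E₀} be the ω-orthogonal complement of E₀. Then V = E₀ ⊕ E₁ as a direct sum, the restrictions of ω to E₀ and to E₁ are both nondegenerate, and P maps each of E₀ and E₁ onto itself. -/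
open Module

/-- For a linear symplectomorphism `P` of a symplectic vector space `(V, ω)`, the generalized
eigenspace `E₀` of `P` for the eigenvalue `1` and its `ω`-orthogonal complement `E₁` give a
symplectic direct sum decomposition `V = E₀ ⊕ E₁` (the restriction of `ω` to each summand is
nondegenerate), and `P` maps each of `E₀`, `E₁` onto itself. -/
theorem symplectic_splitting_generalized_eigenspace_one
    (V : Type*) [AddCommGroup V] [Module ℝ V] [FiniteDimensional ℝ V]
    (ω : LinearMap.BilinForm ℝ V)
    (halt : ∀ v : V, ω v v = 0) (hnd : ω.Nondegenerate)
    (P : V →ₗ[ℝ] V) (hsymp : ∀ u v : V, ω (P u) (P v) = ω u v)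
    (E₀ E₁ : Submodule ℝ V)
    (hE₀ : E₀ = LinearMap.ker ((P - LinearMap.id) ^ (finrank ℝ V)))
    (hE₁ : ∀ v : V, v ∈ E₁ ↔ ∀ e ∈ E₀, ω v e = 0) :
    IsCompl E₀ E₁ ∧
    (∀ v ∈ E₀, (∀ w ∈ E₀, ω v w = 0) → v = 0) ∧
    (∀ v ∈ E₁, (∀ w ∈ E₁, ω v w = 0) → v = 0) ∧
    Submodule.map P E₀ = E₀ ∧ Submodule.map P E₁ = E₁ := by
  classical
  set n := finrank ℝ V with hn
  set Q : V →ₗ[ℝ] V := P - LinearMap.id with hQdef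
  have halt' : ω.IsAlt := halt
  have hrefl : ω.IsRefl := halt'.isRefl
  -- P is injective, hence surjective
  have hPinj : Function.Injective P := by
    rw [← LinearMap.ker_eq_bot, eq_bot_iff]
    intro x hx
    have hx' : P x = 0 := hx
    have hzero : ∀ v : V, ω x v = 0 := by
      intro v
      have := hsymp x v
      rw [hx'] at this
      simpa using this.symm
    simpa using hnd.1 x hzero
  have hPsurj : Function.Surjective P := LinearMap.injective_iff_surjective.mp hPinj
  -- commutation
  have hc : Commute P Q := by
    have : Q = P - 1 := by rw [hQdef, Module.End.one_eq_id]
    rw [this]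
    exact (Commute.refl P).sub_right (Commute.one_right P)
  have hcomm : ∀ k : ℕ, ∀ x : V, (Q ^ k) (P x) = P ((Q ^ k) x) := by
    intro k x
    have h := (hc.pow_right k).symm
    calc (Q ^ k) (P x) = ((Q ^ k) * P) x := rfl
      _ = (P * (Q ^ k)) x := by rw [← h]
      _ = P ((Q ^ k) x) := rfl
  -- basic identity: ω (Q u) v = - ω (P u) (Q v)
  have hbase : ∀ u v : V, ω (Q u) v = - ω (P u) (Q v) := by
    intro u v
    have h1 : Q u = P u - u := rfl
    have h2 : Q v = P v - v := rfl
    rw [h1, h2, map_sub, LinearMap.sub_apply, map_sub, ← hsymp u v]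
    ring
  -- key identity: ω (Q^k u) v = (-1)^k * ω (P^k u) (Q^k v)
  have hkey : ∀ k : ℕ, ∀ u v : V, ω ((Q ^ k) u) v = (-1 : ℝ) ^ k * ω ((P ^ k) u) ((Q ^ k) v) := by
    intro k
    induction k with
    | zero => intro u v; simp
    | succ k ih =>
      intro u v
      have e1 : (Q ^ (k + 1)) u = (Q ^ k) (Q u) := by
        rw [pow_succ]; rfl
      have e2 : (P ^ k) (Q u) = Q ((P ^ k) u) := by
        have h := (hc.pow_left k)
        calc (P ^ k) (Q u) = ((P ^ k) * Q) u := rfl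
          _ = (Q * (P ^ k)) u := by rw [h]
          _ = Q ((P ^ k) u) := rfl
      have e3 : P ((P ^ k) u) = (P ^ (k + 1)) u := by rw [pow_succ']; rfl
      have e4 : Q ((Q ^ k) v) = (Q ^ (k + 1)) v := by rw [pow_succ']; rfl
      rw [e1, ih (Q u) v, e2, hbase ((P ^ k) u) ((Q ^ k) v), e3, e4]
      ring
  -- Fitting decomposition at some large exponent m ≥ n
  obtain ⟨m, hfit, hm⟩ :=
    ((LinearMap.eventually_isCompl_ker_pow_range_pow Q).and
      (Filter.eventually_ge_atTop n)).exists
  have hker : LinearMap.ker (Q ^ m) = E₀ := by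
    rw [hE₀]
    exact Module.End.ker_pow_eq_ker_pow_finrank_of_le hm
  -- range (Q^m) ≤ E₁
  have hrange_le : LinearMap.range (Q ^ m) ≤ E₁ := by
    rintro _ ⟨u, rfl⟩
    rw [hE₁]
    intro e he
    have hez : (Q ^ m) e = 0 := by rw [← LinearMap.mem_ker, hker]; exact he
    rw [hkey m u e, hez]
    simp
  -- E₁ is the orthogonal complement of E₀
  have hE₁orth : E₁ = ω.orthogonal E₀ := by
    ext v
    rw [hE₁, LinearMap.BilinForm.mem_orthogonal_iff]
    constructor
    · intro h e he
      have := h e he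
      exact hrefl v e this
    · intro h e he
      exact hrefl e v (h e he)
  -- dimensions
  have hdim₁ : finrank ℝ E₁ = n - finrank ℝ E₀ := by
    rw [hE₁orth]
    exact LinearMap.BilinForm.finrank_orthogonal hnd E₀
  have hdimr : finrank ℝ (LinearMap.range (Q ^ m)) + finrank ℝ E₀ = n := by
    rw [← hker]
    exact LinearMap.finrank_range_add_finrank_ker (Q ^ m)
  have hrange_eq : LinearMap.range (Q ^ m) = E₁ := by
    apply Submodule.eq_of_le_of_finrank_le hrange_le
    have hle : finrank ℝ E₀ ≤ n := hn ▸ Submodule.finrank_le E₀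
    omega
  have hcompl : IsCompl E₀ E₁ := by rw [← hker, ← hrange_eq]; exact hfit
  refine ⟨hcompl, ?_, ?_, ?_, ?_⟩
  -- nondegeneracy on E₀
  · intro v hv h
    apply hnd.1 v
    intro w
    obtain ⟨e, f, he, hf, rfl⟩ :=
      Submodule.codisjoint_iff_exists_add_eq.mp hcompl.codisjoint w
    have h1 : ω v e = 0 := h e he
    have h2 : ω v f = 0 := by
      have := (hE₁ f).mp hf v hv
      exact hrefl f v this
    rw [map_add, h1, h2, add_zero]
  -- nondegeneracy on E₁
  · intro v hv h
    apply hnd.1 v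
    intro w
    obtain ⟨e, f, he, hf, rfl⟩ :=
      Submodule.codisjoint_iff_exists_add_eq.mp hcompl.codisjoint w
    have h1 : ω v e = 0 := (hE₁ v).mp hv e he
    have h2 : ω v f = 0 := h f hf
    rw [map_add, h1, h2, add_zero]
  -- P maps E₀ onto E₀
  · have hE₀mem : ∀ x : V, x ∈ E₀ ↔ (Q ^ n) x = 0 := by
      intro x; rw [hE₀]; exact LinearMap.mem_ker
    apply le_antisymm
    · intro y hy
      obtain ⟨x, hx, rfl⟩ := Submodule.mem_map.mp hy
      have hx0 : (Q ^ n) x = 0 := (hE₀mem x).mp hx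
      exact (hE₀mem _).mpr (by rw [hcomm, hx0, map_zero])
    · intro e he
      obtain ⟨x, rfl⟩ := hPsurj e
      refine Submodule.mem_map.mpr ⟨x, ?_, rfl⟩
      have h0 : P ((Q ^ n) x) = 0 := by rw [← hcomm]; exact (hE₀mem _).mp he
      exact (hE₀mem x).mpr (hPinj (by rw [h0, map_zero]))
  -- P maps E₁ onto E₁
  · rw [← hrange_eq]
    apply le_antisymm
    · intro y hy
      obtain ⟨w, hw, rfl⟩ := Submodule.mem_map.mp hy
      obtain ⟨u, rfl⟩ := hw
      exact ⟨P u, hcomm m u⟩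
    · rintro _ ⟨u, rfl⟩
      obtain ⟨x, rfl⟩ := hPsurj u
      exact Submodule.mem_map.mpr ⟨(Q ^ m) x, ⟨x, rfl⟩, (hcomm m x).symm⟩
end
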